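/- Let G be a finite simple graph on n ≥ 2 vertices and suppose f(G) ≠ diff(G). Then G has a unique vertex v of maximum degree, and f(G) = 1 + f(G − v), where G − v is the induced subgraph on V(G)∖{v}. -/

import Mathlib

open Finset

variable {V : Type*}

open scoped Classical in
/-- Degree of `v` in the subgraph of `G` induced on the vertex set `A`
(number of neighbours of `v` inside `A`). -/
noncomputable def degOn (G : SimpleGraph V) (A : Finset V) (v : V) : ℕ :=
  (A.filter fun w => G.Adj v w).card

/-- Maximum degree of the subgraph of `G` induced on `A`. -/
noncomputable def maxDegOn (G : SimpleGraph V) (A : Finset V) : ℕ :=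
  A.sup (degOn G A)

open scoped Classical in
/-- The subgraph of `G` induced on `A` has fewer than `k` vertices or at least `k`
vertices realising its maximum degree. -/
def equates (G : SimpleGraph V) (k : ℕ) (A : Finset V) : Prop :=
  A.card < k ∨ k ≤ (A.filter fun v => degOn G A v = maxDegOn G A).card

open scoped Classical in
/-- `f_k` of the subgraph of `G` induced on `A`: the minimum number of vertices of `A`
whose deletion leaves an induced subgraph with fewer than `k` vertices or with at
least `k` vertices realising its maximum degree. -/
noncomputable def fkOn (G : SimpleGraph V) (k : ℕ) (A : Finset V) : ℕ :=
  sInf {m | ∃ S, S ⊆ A ∧ S.card = m ∧ equates G k (A \ S)}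

/-- `f_k(G)`. -/
noncomputable def fk [Fintype V] (G : SimpleGraph V) (k : ℕ) : ℕ :=
  fkOn G k Finset.univ

/-- `diff` of the subgraph of `G` induced on `A`: the largest degree minus the
second-largest degree (with multiplicity) of this subgraph. -/
noncomputable def diffOn (G : SimpleGraph V) (A : Finset V) : ℕ :=
  maxDegOn G A - ((A.val.map (degOn G A)).erase (maxDegOn G A)).sup

/-- `diff(G) = d₁ - d₂`, the difference between the largest and second-largest
vertex degrees of `G`. -/
noncomputable def diffDeg [Fintype V] (G : SimpleGraph V) : ℕ :=
  diffOn G Finset.univ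

section Aux
open scoped Classical

variable (G : SimpleGraph V)

lemma degOn_mono {A B : Finset V} (h : A ⊆ B) (v : V) : degOn G A v ≤ degOn G B v :=
  Finset.card_le_card (Finset.filter_subset_filter _ h)

lemma degOn_le_maxDegOn {A : Finset V} {v : V} (hv : v ∈ A) :
    degOn G A v ≤ maxDegOn G A := Finset.le_sup hv

lemma degOn_le_sdiff [DecidableEq V] (A S : Finset V) (v : V) :
    degOn G A v ≤ degOn G (A \ S) v + S.card := by
  have hsub : (A.filter fun w => G.Adj v w) ⊆
      ((A \ S).filter fun w => G.Adj v w) ∪ S := by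
    intro x hx
    simp only [Finset.mem_filter, Finset.mem_union, Finset.mem_sdiff] at *
    tauto
  calc degOn G A v ≤ (((A \ S).filter fun w => G.Adj v w) ∪ S).card :=
        Finset.card_le_card hsub
    _ ≤ degOn G (A \ S) v + S.card := Finset.card_union_le _ _

lemma fkOn_le0 {k : ℕ} {A S : Finset V} (hS : S ⊆ A) (h : equates G k (A \ S)) :
    fkOn G k A ≤ S.card := Nat.sInf_le ⟨S, hS, rfl, h⟩

lemma fkOn_spec0 (k : ℕ) (hk : 0 < k) (A : Finset V) :
    ∃ S, S ⊆ A ∧ S.card = fkOn G k A ∧ equates G k (A \ S) := by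
  have hne : {m | ∃ S, S ⊆ A ∧ S.card = m ∧ equates G k (A \ S)}.Nonempty :=
    ⟨A.card, A, Finset.Subset.refl A, rfl, Or.inl (by simpa [Finset.sdiff_self] using hk)⟩
  obtain ⟨S, h1, h2, h3⟩ := Nat.sInf_mem hne
  exact ⟨S, h1, h2, h3⟩

end Aux

section Aux2

variable [inst : DecidableEq V] (G : SimpleGraph V)

lemma classical_deceq :
    (fun a b : V => Classical.propDecidable (a = b)) = inst := Subsingleton.elim _ _

lemma fkOn_le {k : ℕ} {A S : Finset V} (hS : S ⊆ A) (h : equates G k (A \ S)) :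
    fkOn G k A ≤ S.card := by
  have h' := h
  rw [← classical_deceq (V := V)] at h'
  exact fkOn_le0 G hS h'

lemma fkOn_spec (k : ℕ) (hk : 0 < k) (A : Finset V) :
    ∃ S, S ⊆ A ∧ S.card = fkOn G k A ∧ equates G k (A \ S) := by
  obtain ⟨S, h1, h2, h3⟩ := fkOn_spec0 G k hk A
  rw [classical_deceq (V := V)] at h3
  exact ⟨S, h1, h2, h3⟩

end Aux2

/-- If `G` has `n ≥ 2` vertices and `f(G) ≠ diff(G)`, then `G` has a
unique vertex `v` of maximum degree and `f(G) = 1 + f(G - v)`. -/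
theorem stmt2 {V : Type*} [Fintype V] [DecidableEq V] (G : SimpleGraph V)
    (hn : 2 ≤ Fintype.card V)
    (hne : fk G 2 ≠ diffDeg G) :
    ∃ v : V, (∀ w, degOn G Finset.univ w ≤ degOn G Finset.univ v) ∧
      (∀ w, degOn G Finset.univ w = degOn G Finset.univ v → w = v) ∧
      fk G 2 = 1 + fkOn G 2 (Finset.univ.erase v) := by
  classical
  have hcardV : (Finset.univ : Finset V).card = Fintype.card V := Finset.card_univ
  have huniv : (Finset.univ : Finset V).Nonempty := by
    rw [← Finset.card_pos, hcardV]; omega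
  obtain ⟨v, hv, hvd⟩ := Finset.exists_mem_eq_sup _ huniv (degOn G (Finset.univ : Finset V))
  have hmaxd : maxDegOn G (Finset.univ : Finset V) = degOn G Finset.univ v := hvd
  have hval : (Finset.univ : Finset V).val = v ::ₘ (Finset.univ.erase v).val := by
    conv_lhs => rw [← Finset.insert_erase (Finset.mem_univ v)]
    rw [Finset.insert_val_of_notMem (Finset.notMem_erase v _)]
  have hdiff : diffDeg G =
      degOn G Finset.univ v - (Finset.univ.erase v).sup (degOn G Finset.univ) := by
    unfold diffDeg diffOn
    rw [hval, Multiset.map_cons, hmaxd, Multiset.erase_cons_head, ← Finset.sup_def]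
  have hd2le : (Finset.univ.erase v).sup (degOn G Finset.univ) ≤ degOn G Finset.univ v := by
    rw [← hmaxd]
    exact Finset.sup_le fun w _ => Finset.le_sup (Finset.mem_univ w)
  have hwle : ∀ w, w ≠ v →
      degOn G Finset.univ w ≤ (Finset.univ.erase v).sup (degOn G Finset.univ) := fun w hw =>
    Finset.le_sup (Finset.mem_erase.mpr ⟨hw, Finset.mem_univ w⟩)
  have hd1le : degOn G Finset.univ v ≤ Fintype.card V - 1 := by
    have hsub : (Finset.univ.filter fun w => G.Adj v w) ⊆ Finset.univ.erase v := by
      intro x hx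
      simp only [Finset.mem_filter, Finset.mem_erase] at *
      exact ⟨(hx.2).ne', Finset.mem_univ x⟩
    calc degOn G Finset.univ v ≤ (Finset.univ.erase v).card := by
          rw [degOn]; exact Finset.card_le_card hsub
      _ = Fintype.card V - 1 := by rw [Finset.card_erase_of_mem (Finset.mem_univ v), hcardV]
  by_cases hex : ∃ w, w ≠ v ∧ degOn G Finset.univ w = degOn G Finset.univ v
  · exfalso
    obtain ⟨w, hwv, hwd⟩ := hex
    have hf0 : fk G 2 ≤ 0 := by
      have heq0 : equates G 2 (Finset.univ \ (∅ : Finset V)) := by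
        rw [Finset.sdiff_empty]
        right
        have hsub : ({v, w} : Finset V) ⊆
            Finset.univ.filter fun x => degOn G Finset.univ x = maxDegOn G Finset.univ := by
          intro x hx
          simp only [Finset.mem_insert, Finset.mem_singleton] at hx
          simp only [Finset.mem_filter, Finset.mem_univ, true_and]
          rcases hx with rfl | rfl
          · exact hmaxd.symm
          · rw [hwd, hmaxd]
        calc 2 = ({v, w} : Finset V).card := (Finset.card_pair hwv.symm).symm
          _ ≤ _ := Finset.card_le_card hsub
      show fkOn G 2 Finset.univ ≤ 0
      simpa using fkOn_le G (Finset.empty_subset _) heq0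
    have hd0 : diffDeg G = 0 := by
      rw [hdiff]
      have : degOn G Finset.univ v ≤ (Finset.univ.erase v).sup (degOn G Finset.univ) :=
        hwd ▸ hwle w hwv
      omega
    exact hne (by omega)
  · push_neg at hex
    have huniq : ∀ w, degOn G Finset.univ w = degOn G Finset.univ v → w = v := by
      intro w h
      by_contra hwv
      exact hex w hwv h
    refine ⟨v, fun w => le_trans (Finset.le_sup (Finset.mem_univ w)) (le_of_eq hvd), huniq, ?_⟩
    have hle : fk G 2 ≤ 1 + fkOn G 2 (Finset.univ.erase v) := by
      obtain ⟨S', hS'sub, hS'card, hS'eq⟩ := fkOn_spec G 2 (by norm_num) (Finset.univ.erase v)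
      have hvS' : v ∉ S' := fun h => (Finset.notMem_erase v _) (hS'sub h)
      have hset : Finset.univ \ insert v S' = (Finset.univ.erase v) \ S' := by
        ext x
        simp only [Finset.mem_sdiff, Finset.mem_univ, true_and, Finset.mem_insert,
          Finset.mem_erase]
        tauto
      have heq2 : equates G 2 (Finset.univ \ insert v S') := by rw [hset]; exact hS'eq
      have h5 := fkOn_le G (Finset.subset_univ (insert v S')) heq2
      rw [Finset.card_insert_of_notMem hvS', hS'card] at h5
      have hfk : fk G 2 = fkOn G 2 Finset.univ := rfl
      omega
    obtain ⟨S, hSsub, hScard, hSeq⟩ := fkOn_spec G 2 (by norm_num) (Finset.univ : Finset V)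
    by_cases hvS : v ∈ S
    · -- f ≥ 1 + f'
      have hset : (Finset.univ.erase v) \ (S.erase v) = Finset.univ \ S := by
        ext x
        simp only [Finset.mem_sdiff, Finset.mem_univ, true_and, Finset.mem_erase]
        by_cases hx : x = v
        · subst hx; simp [hvS]
        · simp [hx]
      have heq2 : equates G 2 ((Finset.univ.erase v) \ (S.erase v)) := by
        rw [hset]; exact hSeq
      have h2 := fkOn_le G (Finset.erase_subset_erase v hSsub) heq2
      rw [Finset.card_erase_of_mem hvS] at h2
      have h3 : 1 ≤ S.card := Finset.card_pos.mpr ⟨v, hvS⟩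
      have hfk : fk G 2 = fkOn G 2 Finset.univ := rfl
      omega
    · -- v ∉ S: then fk = diff, contradicting hne
      exfalso
      apply hne
      have hge : degOn G Finset.univ v - (Finset.univ.erase v).sup (degOn G Finset.univ)
          ≤ fk G 2 := by
        rcases hSeq with hlt | hfil
        · have hcs : (Finset.univ \ S).card = Fintype.card V - S.card := by
            rw [Finset.card_sdiff_of_subset hSsub, hcardV]
          have hSle : S.card ≤ Fintype.card V := by
            rw [← hcardV]; exact Finset.card_le_card hSsub
          have hfk : fk G 2 = fkOn G 2 Finset.univ := rfl
          omega
        · obtain ⟨a, ha, b, hb, hab⟩ := Finset.one_lt_card.mp hfil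
          simp only [Finset.mem_filter] at ha hb
          obtain ⟨u, huH, hud, huv⟩ : ∃ u, u ∈ Finset.univ \ S ∧
              degOn G (Finset.univ \ S) u = maxDegOn G (Finset.univ \ S) ∧ u ≠ v := by
            by_cases hav : a = v
            · exact ⟨b, hb.1, hb.2, fun h => hab (h ▸ hav ▸ rfl)⟩
            · exact ⟨a, ha.1, ha.2, hav⟩
          have hvH : v ∈ Finset.univ \ S :=
            Finset.mem_sdiff.mpr ⟨Finset.mem_univ v, hvS⟩
          have h3 : degOn G Finset.univ v ≤ degOn G (Finset.univ \ S) v + S.card :=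
            degOn_le_sdiff G _ _ v
          have h4 : degOn G (Finset.univ \ S) v ≤ maxDegOn G (Finset.univ \ S) :=
            degOn_le_maxDegOn G hvH
          have h5 : maxDegOn G (Finset.univ \ S) ≤
              (Finset.univ.erase v).sup (degOn G Finset.univ) := by
            rw [← hud]
            exact le_trans (degOn_mono G (Finset.sdiff_subset) u) (hwle u huv)
          have hfk : fk G 2 = fkOn G 2 Finset.univ := rfl
          omega
      have hfle : fk G 2 ≤
          degOn G Finset.univ v - (Finset.univ.erase v).sup (degOn G Finset.univ) := by
        have hnev : (Finset.univ.erase v).Nonempty := by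
          rw [← Finset.card_pos, Finset.card_erase_of_mem (Finset.mem_univ v), hcardV]
          omega
        obtain ⟨u, hu, hud⟩ :=
          Finset.exists_mem_eq_sup _ hnev (degOn G (Finset.univ : Finset V))
        -- hud : (univ.erase v).sup (degOn G univ) = degOn G univ u
        have huv : u ≠ v := (Finset.mem_erase.mp hu).1
        have hBcard : degOn G Finset.univ v - degOn G Finset.univ u ≤
            (((Finset.univ.filter fun w => G.Adj v w)) \
              (insert u (Finset.univ.filter fun w => G.Adj u w))).card := by
          set Nv := (Finset.univ.filter fun w => G.Adj v w) with hNvdef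
          set Nu := (Finset.univ.filter fun w => G.Adj u w) with hNudef
          have hNvcard : Nv.card = degOn G Finset.univ v := by rw [degOn]
          have hNucard : Nu.card = degOn G Finset.univ u := by rw [degOn]
          have key : (Nv ∩ insert u Nu).card ≤ degOn G Finset.univ u := by
            by_cases hadj : G.Adj v u
            · have hvNu : v ∈ Nu := Finset.mem_filter.mpr ⟨Finset.mem_univ v, hadj.symm⟩
              have hsub : Nv ∩ insert u Nu ⊆ insert u (Nu.erase v) := by
                intro x hx
                rw [Finset.mem_inter] at hx
                obtain ⟨hx1, hx2⟩ := hx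
                rw [Finset.mem_insert] at hx2 ⊢
                rcases hx2 with rfl | hx2
                · exact Or.inl rfl
                · refine Or.inr (Finset.mem_erase.mpr ⟨?_, hx2⟩)
                  intro hxv
                  subst hxv
                  exact G.irrefl (Finset.mem_filter.mp hx1).2
              have hNu1 : 1 ≤ Nu.card := Finset.card_pos.mpr ⟨v, hvNu⟩
              calc (Nv ∩ insert u Nu).card ≤ (insert u (Nu.erase v)).card :=
                    Finset.card_le_card hsub
                _ ≤ (Nu.erase v).card + 1 := Finset.card_insert_le _ _
                _ = Nu.card - 1 + 1 := by rw [Finset.card_erase_of_mem hvNu]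
                _ ≤ degOn G Finset.univ u := by omega
            · have hsub : Nv ∩ insert u Nu ⊆ Nu := by
                intro x hx
                rw [Finset.mem_inter] at hx
                obtain ⟨hx1, hx2⟩ := hx
                rw [Finset.mem_insert] at hx2
                rcases hx2 with rfl | hx2
                · exact absurd (Finset.mem_filter.mp hx1).2 hadj
                · exact hx2
              exact hNucard ▸ Finset.card_le_card hsub
          have hsplit := Finset.card_sdiff_add_card_inter Nv (insert u Nu)
          omega
        rw [hud]
        obtain ⟨T, hTsub, hTcard⟩ := Finset.exists_subset_card_eq hBcard
        have hTNv : T ⊆ Finset.univ.filter fun w => G.Adj v w :=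
          hTsub.trans Finset.sdiff_subset
        have hTdisj : ∀ x ∈ T, x ≠ u ∧ x ∉ (Finset.univ.filter fun w => G.Adj u w) := by
          intro x hx
          have hm := Finset.mem_sdiff.mp (hTsub hx)
          rw [Finset.mem_insert] at hm
          exact ⟨fun h => hm.2 (Or.inl h), fun h => hm.2 (Or.inr h)⟩
        have hvT : v ∉ T := fun h => G.irrefl (Finset.mem_filter.mp (hTNv h)).2
        have huT : u ∉ T := fun h => (hTdisj u h).1 rfl
        have hdegv : degOn G (Finset.univ \ T) v = degOn G Finset.univ u := by
          have hfe : ((Finset.univ \ T).filter fun w => G.Adj v w) =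
              (Finset.univ.filter fun w => G.Adj v w) \ T := by
            ext x
            simp only [Finset.mem_filter, Finset.mem_sdiff, Finset.mem_univ, true_and]
            tauto
          rw [degOn, hfe, Finset.card_sdiff_of_subset hTNv, hTcard]
          have hd1 : (Finset.univ.filter fun w => G.Adj v w).card = degOn G Finset.univ v := by
            rw [degOn]
          have hled : degOn G Finset.univ u ≤ degOn G Finset.univ v := hd2le.trans' (by rw [hud])
          omega
        have hdegu : degOn G (Finset.univ \ T) u = degOn G Finset.univ u := by
          have hfe : ((Finset.univ \ T).filter fun w => G.Adj u w) =
              (Finset.univ.filter fun w => G.Adj u w) := by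
            ext x
            simp only [Finset.mem_filter, Finset.mem_sdiff, Finset.mem_univ, true_and]
            constructor
            · tauto
            · intro hx
              exact ⟨fun hT => (hTdisj x hT).2
                (Finset.mem_filter.mpr ⟨Finset.mem_univ x, hx⟩), hx⟩
          rw [degOn, hfe, degOn]
        have hvH : v ∈ Finset.univ \ T := Finset.mem_sdiff.mpr ⟨Finset.mem_univ v, hvT⟩
        have huH : u ∈ Finset.univ \ T := Finset.mem_sdiff.mpr ⟨Finset.mem_univ u, huT⟩
        have hmax : maxDegOn G (Finset.univ \ T) = degOn G Finset.univ u := by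
          apply le_antisymm
          · apply Finset.sup_le
            intro w hw
            by_cases hwv : w = v
            · subst hwv; rw [hdegv]
            · exact le_trans (degOn_mono G Finset.sdiff_subset w)
                ((hwle w hwv).trans (le_of_eq hud))
          · rw [← hdegv]; exact Finset.le_sup hvH
        have heq : equates G 2 (Finset.univ \ T) := by
          right
          have hsub : ({v, u} : Finset V) ⊆ (Finset.univ \ T).filter
              fun x => degOn G (Finset.univ \ T) x = maxDegOn G (Finset.univ \ T) := by
            intro x hx
            simp only [Finset.mem_insert, Finset.mem_singleton] at hx
            rw [Finset.mem_filter]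
            rcases hx with rfl | rfl
            · exact ⟨hvH, by rw [hdegv, hmax]⟩
            · exact ⟨huH, by rw [hdegu, hmax]⟩
          calc 2 = ({v, u} : Finset V).card := (Finset.card_pair huv.symm).symm
            _ ≤ _ := Finset.card_le_card hsub
        have hfin := fkOn_le G (Finset.subset_univ T) heq
        have hfk : fk G 2 = fkOn G 2 Finset.univ := rfl
        omega
      omega
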